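/- The linear map ι from C^n(Σ̂) to Hom_{BM}(I_Σ^{⊗_{S_Σ} n}, I_Σ) defined by ι(f)((σ_0,σ_1)⊗⋯⊗(σ_{n-1},σ_n)) := f(σ_0≤⋯≤σ_n)·(σ_0,σ_n) is a linear isomorphism for each n≥1. -/

import Mathlib

open Finset

variable {K P : Type} [Field K] [Fintype P] [PartialOrder P] [DecidableEq P]
  [DecidableRel ((· ≤ ·) : P → P → Prop)]

abbrev IncPair (P : Type) [PartialOrder P] := {p : P × P // p.1 ≤ p.2}

abbrev Inc (K P : Type) [PartialOrder P] := IncPair P → K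

noncomputable def incMul (f g : Inc K P) : Inc K P := fun q =>
  ∑ b : P, if h : q.1.1 ≤ b ∧ b ≤ q.1.2
    then f ⟨(q.1.1, b), h.1⟩ * g ⟨(b, q.1.2), h.2⟩ else 0

def incBasis (σ τ : P) : Inc K P := fun q => if q.1 = (σ, τ) then 1 else 0

def incOne : Inc K P := fun q => if q.1.1 = q.1.2 then 1 else 0

def Chain (P : Type) [PartialOrder P] (n : ℕ) := {f : Fin (n+1) → P // Monotone f}

noncomputable instance (n : ℕ) : Fintype (Chain P n) :=
  Fintype.ofInjective (fun c : Chain P n => c.1) Subtype.val_injective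

def face {n : ℕ} (i : Fin (n+2)) (c : Chain P (n+1)) : Chain P n :=
  ⟨c.1 ∘ i.succAbove, c.2.comp (Fin.strictMono_succAbove i).monotone⟩

def degen {n : ℕ} (i : Fin (n+1)) (c : Chain P n) : Chain P (n+1) :=
  ⟨c.1 ∘ i.predAbove, c.2.comp (Fin.predAbove_right_monotone i)⟩

open scoped TensorProduct

abbrev TP (K P : Type) [Field K] [PartialOrder P] (n : ℕ) :=
  PiTensorProduct K (fun _ : Fin n => Inc K P)

noncomputable def relators (K P : Type) [Field K] [Fintype P] [PartialOrder P] [DecidableEq P]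
    [DecidableRel ((· ≤ ·) : P → P → Prop)] (n : ℕ) :
    Submodule K (TP K P n) :=
  Submodule.span K { t | ∃ (v : Fin n → Inc K P) (j j' : Fin n) (σ : P),
    (j:ℕ) + 1 = (j':ℕ) ∧
    t = PiTensorProduct.tprod K (Function.update v j (incMul (v j) (incBasis σ σ)))
      - PiTensorProduct.tprod K (Function.update v j' (incMul (incBasis σ σ) (v j'))) }

abbrev Q (K P : Type) [Field K] [Fintype P] [PartialOrder P] [DecidableEq P]
    [DecidableRel ((· ≤ ·) : P → P → Prop)] (n : ℕ) :=
  TP K P n ⧸ relators K P n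

noncomputable def chainVec {n : ℕ} (c : Chain P n) : Fin n → Inc K P :=
  fun i => incBasis (c.1 i.castSucc) (c.1 i.succ)

noncomputable def chainT {n : ℕ} (c : Chain P n) : TP K P n :=
  PiTensorProduct.tprod K (chainVec c)

noncomputable def chainQ {n : ℕ} (c : Chain P n) : Q K P n :=
  Submodule.Quotient.mk (chainT c)

noncomputable def muM {n : ℕ} (c : Chain P n) :
    MultilinearMap K (fun _ : Fin n => Inc K P) (Inc K P) :=
  (MultilinearMap.mkPiRing K (Fin n) (incBasis (c.1 0) (c.1 (Fin.last n)))).compLinearMap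
    (fun i => LinearMap.proj ⟨(c.1 i.castSucc, c.1 i.succ), c.2 (Fin.castSucc_lt_succ : i.castSucc < i.succ).le⟩)

noncomputable def muL {n : ℕ} (c : Chain P n) : TP K P n →ₗ[K] Inc K P :=
  PiTensorProduct.lift (muM c)

noncomputable def iota {n : ℕ} (f : Chain P n → K) : TP K P n →ₗ[K] Inc K P :=
  ∑ c : Chain P n, f c • muL c

/-- The property of being a morphism of `S_Σ`-bimodules `I_Σ^{⊗ n} → I_Σ` that factors through
the relative tensor power `I_Σ^{⊗_{S_Σ} n}`: it kills the relators, and it is equivariant for the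
left and right `S_Σ`-actions (multiplication by the diagonal idempotents on the first,
resp. last, tensor factor). -/
def IsBM {n : ℕ} (g : TP K P (n+1) →ₗ[K] Inc K P) : Prop :=
  relators K P (n+1) ≤ LinearMap.ker g ∧
  (∀ (v : Fin (n+1) → Inc K P) (σ : P),
    g (PiTensorProduct.tprod K (Function.update v 0 (incMul (incBasis σ σ) (v 0)))) =
      incMul (incBasis σ σ) (g (PiTensorProduct.tprod K v))) ∧
  (∀ (v : Fin (n+1) → Inc K P) (σ : P),
    g (PiTensorProduct.tprod K
        (Function.update v (Fin.last n) (incMul (v (Fin.last n)) (incBasis σ σ)))) =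
      incMul (g (PiTensorProduct.tprod K v)) (incBasis σ σ))


-- auxiliary lemmas
def cpr {n : ℕ} (c : Chain P n) (i : Fin n) : IncPair P :=
  ⟨(c.1 i.castSucc, c.1 i.succ), c.2 (Fin.castSucc_lt_succ : i.castSucc < i.succ).le⟩

lemma incMul_basis_left (σ : P) (f : Inc K P) :
    incMul (incBasis σ σ) f = fun q => if q.1.1 = σ then f q else 0 := by
  funext q
  obtain ⟨⟨a, b⟩, hab⟩ := q
  show (∑ x : P, if h : a ≤ x ∧ x ≤ b
      then (if ((a, x) : P × P) = (σ, σ) then (1:K) else 0) * f ⟨(x, b), h.2⟩ else 0)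
    = if a = σ then f ⟨(a, b), hab⟩ else 0
  rcases eq_or_ne a σ with h | h
  · subst h
    rw [if_pos rfl, Finset.sum_eq_single a]
    · rw [dif_pos ⟨le_refl a, hab⟩, if_pos rfl, one_mul]
    · intro x _ hx
      rcases Classical.em (a ≤ x ∧ x ≤ b) with hc | hc
      · rw [dif_pos hc, if_neg (by simp [hx]), zero_mul]
      · rw [dif_neg hc]
    · intro hmem; exact absurd (Finset.mem_univ a) hmem
  · rw [if_neg h]
    apply Finset.sum_eq_zero
    intro x _
    rcases Classical.em (a ≤ x ∧ x ≤ b) with hc | hc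
    · rw [dif_pos hc, if_neg (by simp [h]), zero_mul]
    · rw [dif_neg hc]

lemma incMul_basis_right (σ : P) (f : Inc K P) :
    incMul f (incBasis σ σ) = fun q => if q.1.2 = σ then f q else 0 := by
  funext q
  obtain ⟨⟨a, b⟩, hab⟩ := q
  show (∑ x : P, if h : a ≤ x ∧ x ≤ b
      then f ⟨(a, x), h.1⟩ * (if ((x, b) : P × P) = (σ, σ) then (1:K) else 0) else 0)
    = if b = σ then f ⟨(a, b), hab⟩ else 0
  rcases eq_or_ne b σ with h | h
  · subst h
    rw [if_pos rfl, Finset.sum_eq_single b]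
    · rw [dif_pos ⟨hab, le_refl b⟩, if_pos rfl, mul_one]
    · intro x _ hx
      rcases Classical.em (a ≤ x ∧ x ≤ b) with hc | hc
      · rw [dif_pos hc, if_neg (by simp [hx]), mul_zero]
      · rw [dif_neg hc]
    · intro hmem; exact absurd (Finset.mem_univ b) hmem
  · rw [if_neg h]
    apply Finset.sum_eq_zero
    intro x _
    rcases Classical.em (a ≤ x ∧ x ≤ b) with hc | hc
    · rw [dif_pos hc, if_neg (by simp [h]), mul_zero]
    · rw [dif_neg hc]

lemma incBasis_self (a b : P) (h : a ≤ b) : incBasis (K := K) a b ⟨(a, b), h⟩ = 1 := if_pos rfl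

lemma incMul_diag_basis (a b : P) (h : a ≤ b) :
    incMul (incBasis (K := K) a a) (incBasis a b) = incBasis a b := by
  rw [incMul_basis_left]
  funext q
  rcases eq_or_ne q.1.1 a with h1 | h1
  · rw [if_pos h1]
  · rw [if_neg h1, incBasis, if_neg (fun hc => h1 (congrArg Prod.fst hc))]

lemma incMul_basis_diag (a b : P) (h : a ≤ b) :
    incMul (incBasis (K := K) a b) (incBasis b b) = incBasis a b := by
  rw [incMul_basis_right]
  funext q
  rcases eq_or_ne q.1.2 b with h1 | h1
  · rw [if_pos h1]
  · rw [if_neg h1, incBasis, if_neg (fun hc => h1 (congrArg Prod.snd hc))]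

lemma incMul_diag_basis_ne {σ a : P} (h : a ≠ σ) (b : P) :
    incMul (incBasis (K := K) σ σ) (incBasis a b) = 0 := by
  rw [incMul_basis_left]
  funext q
  rcases eq_or_ne q.1.1 σ with h1 | h1
  · rw [if_pos h1, incBasis, if_neg (fun hc => h ((congrArg Prod.fst hc).symm.trans h1)), Pi.zero_apply]
  · rw [if_neg h1, Pi.zero_apply]

lemma muL_tprod {n : ℕ} (c : Chain P n) (v : Fin n → Inc K P) :
    muL c (PiTensorProduct.tprod K v)
      = (∏ i, v i (cpr c i)) • incBasis (c.1 0) (c.1 (Fin.last n)) := by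
  rw [muL, PiTensorProduct.lift.tprod, muM]
  rw [MultilinearMap.compLinearMap_apply, MultilinearMap.mkPiRing_apply]
  rfl

lemma update_eval {m : ℕ} (v : Fin m → Inc K P) (j : Fin m) (w : Inc K P)
    (pr : Fin m → IncPair P) :
    (fun i => Function.update v j w i (pr i))
      = Function.update (fun i => v i (pr i)) j (w (pr j)) := by
  funext i
  rcases eq_or_ne i j with h | h
  · subst h; simp
  · simp [Function.update_of_ne h]

lemma prod_update_self {m : ℕ} (F : Fin m → K) (j : Fin m) (x : K) (hx : x = F j) :
    ∏ i, Function.update F j x i = ∏ i, F i := by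
  subst hx; rw [Function.update_eq_self]

lemma prod_update_zero {m : ℕ} (F : Fin m → K) (j : Fin m) :
    ∏ i, Function.update F j (0:K) i = 0 :=
  Finset.prod_eq_zero (Finset.mem_univ j) (Function.update_self j 0 F)

lemma chain_ext_pairs {n : ℕ} (c c' : Chain P (n+1))
    (h : ∀ i : Fin (n+1), c.1 i.castSucc = c'.1 i.castSucc ∧ c.1 i.succ = c'.1 i.succ) :
    c = c' := by
  apply Subtype.ext
  funext j
  induction j using Fin.lastCases with
  | last =>
    have := (h (Fin.last n)).2
    rwa [Fin.succ_last] at this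
  | cast i => exact (h i).1

lemma chainVec_eval {n : ℕ} (c c' : Chain P (n+1)) (i : Fin (n+1)) :
    chainVec (K := K) c i (cpr c' i)
      = if c'.1 i.castSucc = c.1 i.castSucc ∧ c'.1 i.succ = c.1 i.succ then 1 else 0 := by
  rw [chainVec, incBasis]
  simp [cpr, Prod.ext_iff]

lemma muL_chainT_self {n : ℕ} (c : Chain P (n+1)) :
    muL (K := K) c (chainT c) = incBasis (c.1 0) (c.1 (Fin.last (n+1))) := by
  rw [chainT, muL_tprod]
  have : ∀ i, chainVec (K := K) c i (cpr c i) = 1 := by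
    intro i; rw [chainVec_eval, if_pos ⟨rfl, rfl⟩]
  rw [Finset.prod_congr rfl (fun i _ => this i), Finset.prod_const_one, one_smul]

lemma muL_chainT_ne {n : ℕ} (c c' : Chain P (n+1)) (h : c' ≠ c) :
    muL (K := K) c' (chainT c) = 0 := by
  rw [chainT, muL_tprod]
  have : ∃ i : Fin (n+1), ¬(c'.1 i.castSucc = c.1 i.castSucc ∧ c'.1 i.succ = c.1 i.succ) := by
    by_contra hc
    push_neg at hc
    exact h (chain_ext_pairs c' c (fun i => hc i))
  obtain ⟨i, hi⟩ := this
  rw [Finset.prod_eq_zero (Finset.mem_univ i) (by rw [chainVec_eval, if_neg hi]), zero_smul]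

lemma iota_chainT {n : ℕ} (f : Chain P (n+1) → K) (c : Chain P (n+1)) :
    iota f (chainT c) = f c • incBasis (c.1 0) (c.1 (Fin.last (n+1))) := by
  rw [iota, LinearMap.sum_apply]
  rw [Finset.sum_eq_single c]
  · rw [LinearMap.smul_apply, muL_chainT_self]
  · intro b _ hb
    rw [LinearMap.smul_apply, muL_chainT_ne c b hb, smul_zero]
  · intro hmem; exact absurd (Finset.mem_univ c) hmem

lemma incBasis_apply_ne_fst {a b : P} {q : IncPair P} (h : q.1.1 ≠ a) :
    incBasis (K := K) a b q = 0 := by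
  rw [incBasis, if_neg (fun hc => h (congrArg Prod.fst hc))]

lemma incBasis_apply_ne_snd {a b : P} {q : IncPair P} (h : q.1.2 ≠ b) :
    incBasis (K := K) a b q = 0 := by
  rw [incBasis, if_neg (fun hc => h (congrArg Prod.snd hc))]

lemma incMul_basis_left_apply (σ : P) (f : Inc K P) (q : IncPair P) :
    incMul (incBasis σ σ) f q = if q.1.1 = σ then f q else 0 :=
  congrFun (incMul_basis_left σ f) q

lemma incMul_basis_right_apply (σ : P) (f : Inc K P) (q : IncPair P) :
    incMul f (incBasis σ σ) q = if q.1.2 = σ then f q else 0 :=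
  congrFun (incMul_basis_right σ f) q

lemma muL_relator_eq {n : ℕ} (c : Chain P (n+1)) (v : Fin (n+1) → Inc K P)
    (j j' : Fin (n+1)) (σ : P) (hjj' : (j:ℕ) + 1 = (j':ℕ)) :
    muL c (PiTensorProduct.tprod K (Function.update v j (incMul (v j) (incBasis σ σ))))
      = muL c (PiTensorProduct.tprod K (Function.update v j' (incMul (incBasis σ σ) (v j')))) := by
  rw [muL_tprod, muL_tprod, update_eval, update_eval]
  have h1 : incMul (v j) (incBasis σ σ) (cpr c j)
      = if c.1 j.succ = σ then v j (cpr c j) else 0 := incMul_basis_right_apply σ (v j) (cpr c j)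
  have h2 : incMul (incBasis σ σ) (v j') (cpr c j')
      = if c.1 j'.castSucc = σ then v j' (cpr c j') else 0 := incMul_basis_left_apply σ (v j') (cpr c j')
  have hjs : (j.succ : Fin (n+2)) = j'.castSucc := by
    apply Fin.ext; simp [hjj']
  rcases eq_or_ne (c.1 j.succ) σ with h | h
  · rw [h1, if_pos h, h2, if_pos (by rw [← hjs]; exact h)]
    rw [prod_update_self _ _ _ rfl, prod_update_self _ _ _ rfl]
  · rw [h1, if_neg h, h2, if_neg (by rw [← hjs]; exact h)]
    rw [prod_update_zero, prod_update_zero]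

lemma iota_tprod_apply {n : ℕ} (f : Chain P (n+1) → K) (v : Fin (n+1) → Inc K P)
    (q : IncPair P) :
    iota f (PiTensorProduct.tprod K v) q
      = ∑ c : Chain P (n+1), f c * ((∏ i, v i (cpr c i))
          * incBasis (c.1 0) (c.1 (Fin.last (n+1))) q) := by
  rw [iota, LinearMap.sum_apply, Finset.sum_apply]
  apply Finset.sum_congr rfl
  intro c _
  rw [LinearMap.smul_apply, muL_tprod, Pi.smul_apply, Pi.smul_apply, smul_eq_mul, smul_eq_mul]

lemma isBM_iota {n : ℕ} (f : Chain P (n+1) → K) : IsBM (iota f) := by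
  refine ⟨?_, ?_, ?_⟩
  · apply Submodule.span_le.mpr
    rintro t ⟨v, j, j', σ, hjj', rfl⟩
    rw [SetLike.mem_coe, LinearMap.mem_ker, map_sub, sub_eq_zero]
    rw [iota, LinearMap.sum_apply, LinearMap.sum_apply]
    apply Finset.sum_congr rfl
    intro c _
    rw [LinearMap.smul_apply, LinearMap.smul_apply, muL_relator_eq c v j j' σ hjj']
  · intro v σ
    funext q
    rw [incMul_basis_left_apply]
    simp only [iota_tprod_apply]
    rcases eq_or_ne q.1.1 σ with hq | hq
    · rw [if_pos hq]
      apply Finset.sum_congr rfl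
      intro c _
      rw [update_eval]
      have h0 : incMul (incBasis σ σ) (v 0) (cpr c 0)
          = if c.1 ((0 : Fin (n+1)).castSucc) = σ then v 0 (cpr c 0) else 0 :=
        incMul_basis_left_apply σ (v 0) (cpr c 0)
      rcases eq_or_ne (c.1 ((0 : Fin (n+1)).castSucc)) σ with h0c | h0c
      · rw [h0, if_pos h0c, prod_update_self _ _ _ rfl]
      · have he : incBasis (K := K) (c.1 0) (c.1 (Fin.last (n+1))) q = 0 := by
          apply incBasis_apply_ne_fst
          rw [hq]
          intro hs
          exact h0c (by rw [Fin.castSucc_zero, ← hs])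
        rw [he, mul_zero, mul_zero, mul_zero, mul_zero]
    · rw [if_neg hq]
      apply Finset.sum_eq_zero
      intro c _
      rw [update_eval]
      have h0 : incMul (incBasis σ σ) (v 0) (cpr c 0)
          = if c.1 ((0 : Fin (n+1)).castSucc) = σ then v 0 (cpr c 0) else 0 :=
        incMul_basis_left_apply σ (v 0) (cpr c 0)
      rcases eq_or_ne (c.1 ((0 : Fin (n+1)).castSucc)) σ with h0c | h0c
      · have hc0 : c.1 (0 : Fin (n+2)) = σ := by rw [← Fin.castSucc_zero]; exact h0c
        have he : incBasis (K := K) (c.1 0) (c.1 (Fin.last (n+1))) q = 0 := by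
          apply incBasis_apply_ne_fst
          rw [hc0]; exact hq
        rw [he, mul_zero, mul_zero]
      · rw [h0, if_neg h0c, prod_update_zero, zero_mul, mul_zero]
  · intro v σ
    funext q
    rw [incMul_basis_right_apply]
    simp only [iota_tprod_apply]
    rcases eq_or_ne q.1.2 σ with hq | hq
    · rw [if_pos hq]
      apply Finset.sum_congr rfl
      intro c _
      rw [update_eval]
      have h0 : incMul (v (Fin.last n)) (incBasis σ σ) (cpr c (Fin.last n))
          = if c.1 (Fin.last n).succ = σ then v (Fin.last n) (cpr c (Fin.last n)) else 0 :=
        incMul_basis_right_apply σ (v (Fin.last n)) (cpr c (Fin.last n))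
      rcases eq_or_ne (c.1 (Fin.last n).succ) σ with h0c | h0c
      · rw [h0, if_pos h0c, prod_update_self _ _ _ rfl]
      · have he : incBasis (K := K) (c.1 0) (c.1 (Fin.last (n+1))) q = 0 := by
          apply incBasis_apply_ne_snd
          rw [hq]
          intro hs
          exact h0c (by rw [Fin.succ_last, ← hs])
        rw [he, mul_zero, mul_zero, mul_zero, mul_zero]
    · rw [if_neg hq]
      apply Finset.sum_eq_zero
      intro c _
      rw [update_eval]
      have h0 : incMul (v (Fin.last n)) (incBasis σ σ) (cpr c (Fin.last n))
          = if c.1 (Fin.last n).succ = σ then v (Fin.last n) (cpr c (Fin.last n)) else 0 :=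
        incMul_basis_right_apply σ (v (Fin.last n)) (cpr c (Fin.last n))
      rcases eq_or_ne (c.1 (Fin.last n).succ) σ with h0c | h0c
      · have hcl : c.1 (Fin.last (n+1)) = σ := by rw [← Fin.succ_last]; exact h0c
        have he : incBasis (K := K) (c.1 0) (c.1 (Fin.last (n+1))) q = 0 := by
          apply incBasis_apply_ne_snd
          rw [hcl]; exact hq
        rw [he, mul_zero, mul_zero]
      · rw [h0, if_neg h0c, prod_update_zero, zero_mul, mul_zero]

lemma g_chainT {n : ℕ} {g : TP K P (n+1) →ₗ[K] Inc K P} (hg : IsBM g) (c : Chain P (n+1)) :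
    g (chainT c) = g (chainT c) ⟨(c.1 0, c.1 (Fin.last (n+1))), c.2 (Fin.zero_le _)⟩
      • incBasis (c.1 0) (c.1 (Fin.last (n+1))) := by
  have h1 := hg.2.1 (chainVec c) (c.1 0)
  have e1 : incMul (incBasis (c.1 0) (c.1 0)) (chainVec (K := K) c 0) = chainVec c 0 := by
    simp only [chainVec]
    have h00 : c.1 ((0 : Fin (n+1)).castSucc) = c.1 0 := by rw [Fin.castSucc_zero]
    rw [h00]
    exact incMul_diag_basis _ _ (c.2 (Fin.zero_le _))
  rw [e1, Function.update_eq_self] at h1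
  have h2 := hg.2.2 (chainVec c) (c.1 (Fin.last (n+1)))
  have e2 : incMul (chainVec (K := K) c (Fin.last n))
      (incBasis (c.1 (Fin.last (n+1))) (c.1 (Fin.last (n+1)))) = chainVec c (Fin.last n) := by
    simp only [chainVec]
    have hll : c.1 ((Fin.last n).succ) = c.1 (Fin.last (n+1)) := by rw [Fin.succ_last]
    rw [hll]
    exact incMul_basis_diag _ _ (c.2 (Fin.le_last _))
  rw [e2, Function.update_eq_self] at h2
  have hct : PiTensorProduct.tprod K (chainVec (K := K) c) = chainT c := rfl
  rw [hct] at h1 h2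
  funext q
  rcases eq_or_ne q.1 ((c.1 0, c.1 (Fin.last (n+1))) : P × P) with hq | hq
  · have hqe : q = ⟨(c.1 0, c.1 (Fin.last (n+1))), c.2 (Fin.zero_le _)⟩ := Subtype.ext hq
    rw [hqe, Pi.smul_apply, smul_eq_mul, incBasis_self, mul_one]
  · have hor : q.1.1 ≠ c.1 0 ∨ q.1.2 ≠ c.1 (Fin.last (n+1)) := by
      by_contra hcon
      push_neg at hcon
      exact hq (Prod.ext hcon.1 hcon.2)
    have hrhs : incBasis (K := K) (c.1 0) (c.1 (Fin.last (n+1))) q = 0 := by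
      rw [incBasis, if_neg hq]
    rw [Pi.smul_apply, smul_eq_mul, hrhs, mul_zero]
    rcases hor with hor | hor
    · have hv := congrFun h1 q
      rw [incMul_basis_left_apply, if_neg hor] at hv
      exact hv
    · have hv := congrFun h2 q
      rw [incMul_basis_right_apply, if_neg hor] at hv
      exact hv

lemma basisFun_eq_incBasis (p : IncPair P) :
    (Pi.basisFun K (IncPair P)) p = incBasis p.1.1 p.1.2 := by
  funext q
  rcases eq_or_ne q p with h | h
  · subst h
    have : incBasis (K := K) q.1.1 q.1.2 q = 1 := by rw [incBasis, if_pos rfl]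
    rw [this, Pi.basisFun_apply]
    simp
  · have h1 : q.1 ≠ ((p.1.1, p.1.2) : P × P) := fun hc => h (Subtype.ext (by rw [hc]))
    have : incBasis (K := K) p.1.1 p.1.2 q = 0 := by rw [incBasis, if_neg h1]
    rw [this, Pi.basisFun_apply]
    simp [Pi.single_eq_of_ne h]

lemma g_vanish {n : ℕ} {g : TP K P (n+1) →ₗ[K] Inc K P}
    (hker : relators K P (n+1) ≤ LinearMap.ker g) (p : Fin (n+1) → IncPair P)
    (i : Fin n) (hi : (p i.castSucc).1.2 ≠ (p i.succ).1.1) :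
    g (PiTensorProduct.tprod K (fun j => incBasis (p j).1.1 (p j).1.2)) = 0 := by
  set w : Fin (n+1) → Inc K P := fun j => incBasis (p j).1.1 (p j).1.2 with hw
  set σ : P := (p i.castSucc).1.2 with hσ
  have hrel : PiTensorProduct.tprod K
        (Function.update w i.castSucc (incMul (w i.castSucc) (incBasis σ σ)))
      - PiTensorProduct.tprod K
        (Function.update w i.succ (incMul (incBasis σ σ) (w i.succ)))
      ∈ relators K P (n+1) :=
    Submodule.subset_span ⟨w, i.castSucc, i.succ, σ, by simp, rfl⟩
  have h0 := hker hrel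
  rw [LinearMap.mem_ker, map_sub, sub_eq_zero] at h0
  have eA : Function.update w i.castSucc (incMul (w i.castSucc) (incBasis σ σ)) = w := by
    have : incMul (w i.castSucc) (incBasis σ σ) = w i.castSucc := by
      show incMul (incBasis (p i.castSucc).1.1 σ) (incBasis σ σ) = _
      exact incMul_basis_diag _ _ (p i.castSucc).2
    rw [this, Function.update_eq_self]
  have eB : incMul (incBasis (K := K) σ σ) (w i.succ) = 0 :=
    incMul_diag_basis_ne (fun h => hi h.symm) _
  rw [eA] at h0
  rw [h0, eB]
  rw [show (PiTensorProduct.tprod K) (Function.update w i.succ (0 : Inc K P)) = 0 from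
    MultilinearMap.map_update_zero _ w i.succ, map_zero]

lemma iota_vanish {n : ℕ} (f : Chain P (n+1) → K) (p : Fin (n+1) → IncPair P)
    (i : Fin n) (hi : (p i.castSucc).1.2 ≠ (p i.succ).1.1) :
    iota f (PiTensorProduct.tprod K (fun j => incBasis (p j).1.1 (p j).1.2)) = 0 := by
  rw [iota, LinearMap.sum_apply]
  apply Finset.sum_eq_zero
  intro c _
  rw [LinearMap.smul_apply, muL_tprod]
  have hz : (∏ j, incBasis (K := K) (p j).1.1 (p j).1.2 (cpr c j)) = 0 := by
    by_cases h1 : c.1 (i.castSucc).succ = (p i.castSucc).1.2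
    · apply Finset.prod_eq_zero (Finset.mem_univ i.succ)
      apply incBasis_apply_ne_fst
      show c.1 ((i.succ).castSucc) ≠ (p i.succ).1.1
      rw [← Fin.succ_castSucc, h1]
      exact hi
    · exact Finset.prod_eq_zero (Finset.mem_univ i.castSucc) (incBasis_apply_ne_snd h1)
  rw [hz, zero_smul, smul_zero]

lemma iota_eq_of_isBM {n : ℕ} (g : TP K P (n+1) →ₗ[K] Inc K P) (hg : IsBM g) :
    iota (fun c : Chain P (n+1) =>
      g (chainT c) ⟨(c.1 0, c.1 (Fin.last (n+1))), c.2 (Fin.zero_le _)⟩) = g := by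
  set f : Chain P (n+1) → K := fun c =>
    g (chainT c) ⟨(c.1 0, c.1 (Fin.last (n+1))), c.2 (Fin.zero_le _)⟩ with hf
  apply PiTensorProduct.ext
  apply Module.Basis.ext_multilinear (fun _ => Pi.basisFun K (IncPair P))
  intro p
  simp only [LinearMap.compMultilinearMap_apply]
  have hb : (fun i : Fin (n+1) => (Pi.basisFun K (IncPair P)) (p i))
      = fun i => incBasis (K := K) (p i).1.1 (p i).1.2 :=
    funext fun i => basisFun_eq_incBasis (p i)
  rw [hb]
  by_cases hch : ∀ i : Fin n, (p i.castSucc).1.2 = (p i.succ).1.1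
  · set g0 : Fin (n+2) → P := Fin.snoc (fun i => (p i).1.1) ((p (Fin.last n)).1.2) with hg0
    have hcs : ∀ i : Fin (n+1), g0 i.castSucc = (p i).1.1 := fun i => Fin.snoc_castSucc _ _ _
    have hsc : ∀ i : Fin (n+1), g0 i.succ = (p i).1.2 := by
      intro i
      induction i using Fin.lastCases with
      | last => rw [Fin.succ_last]; exact Fin.snoc_last _ _
      | cast i =>
        rw [Fin.succ_castSucc, hcs i.succ]
        exact (hch i).symm
    have hmono : Monotone g0 := Fin.monotone_iff_le_succ.2 (fun i => by
      rw [hcs i, hsc i]; exact (p i).2)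
    set c : Chain P (n+1) := ⟨g0, hmono⟩ with hc
    have hw : (fun i => incBasis (K := K) (p i).1.1 (p i).1.2) = chainVec c := by
      funext i
      show incBasis (K := K) (p i).1.1 (p i).1.2 = incBasis (c.1 i.castSucc) (c.1 i.succ)
      rw [show c.1 i.castSucc = (p i).1.1 from hcs i, show c.1 i.succ = (p i).1.2 from hsc i]
    rw [hw]
    show iota f (chainT c) = g (chainT c)
    rw [iota_chainT, g_chainT hg c]
  · push_neg at hch
    obtain ⟨i, hi⟩ := hch
    rw [iota_vanish f p i hi, g_vanish hg.1 p i hi]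

/-- For each `n ≥ 1`, the map `ι` defined by
`ι(f)((σ₀,σ₁)⊗⋯⊗(σ_{n-1},σ_n)) = f(σ₀≤⋯≤σ_n)·(σ₀,σ_n)` is a linear isomorphism from
`C^n(Σ̂)` onto `Hom_{BM}(I_Σ^{⊗_{S_Σ}n}, I_Σ)`: it is injective and its image is exactly the
space of `S_Σ`-bimodule morphisms factoring through the relative tensor power. -/
theorem iota_linear_isomorphism (n : ℕ) :
    Function.Injective (fun f : Chain P (n+1) → K => iota f) ∧
    Set.range (fun f : Chain P (n+1) → K => iota f) = {g | IsBM g} ∧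
    ∀ (f : Chain P (n+1) → K) (c : Chain P (n+1)),
      iota f (chainT c) = f c • incBasis (c.1 0) (c.1 (Fin.last (n+1))) := by
  refine ⟨?_, ?_, fun f c => iota_chainT f c⟩
  · intro f f' h
    funext c
    have h0 : iota (K := K) (P := P) f = iota f' := h
    have h1 := congrFun (congrArg (fun φ : TP K P (n+1) →ₗ[K] Inc K P => φ (chainT c)) h0)
      ⟨(c.1 0, c.1 (Fin.last (n+1))), c.2 (Fin.zero_le _)⟩
    simp only [iota_chainT] at h1
    rw [Pi.smul_apply, Pi.smul_apply, smul_eq_mul, smul_eq_mul, incBasis_self,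
      mul_one, mul_one] at h1
    exact h1
  · ext g
    simp only [Set.mem_range, Set.mem_setOf_eq]
    constructor
    · rintro ⟨f, rfl⟩
      exact isBM_iota f
    · intro hg
      exact ⟨_, iota_eq_of_isBM g hg⟩
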